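/- Let K = K₁ ∪ ⋯ ∪ Kₙ be finite knowledge bases such that MUSes(K) is the disjoint union of MUSes(K₁), …, MUSes(Kₙ), and the Kᵢ are pairwise disjoint. Then the number of maximal satisfiable subsets of K equals the product of the numbers of maximal satisfiable subsets of the Kᵢ: |MSSes(K)| = |MSSes(K₁)| × ⋯ × |MSSes(Kₙ)|. -/
import Mathlib


inductive PropForm (V : Type) : Type
  | var : V → PropForm V
  | neg : PropForm V → PropForm V
  | conj : PropForm V → PropForm V → PropForm V
  | disj : PropForm V → PropForm V → PropForm V
  deriving DecidableEq

namespace PropForm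
def eval {V : Type} (v : V → Bool) : PropForm V → Bool
  | var p => v p
  | neg f => !(eval v f)
  | conj f g => eval v f && eval v g
  | disj f g => eval v f || eval v g
end PropForm

/-- A finite knowledge base `K` is satisfiable (consistent) if some valuation makes
all its formulas true. -/
def Sat {V : Type} (K : Finset (PropForm V)) : Prop :=
  ∃ v : V → Bool, ∀ f ∈ K, f.eval v = true

/-- `M` is a minimal unsatisfiable set: inconsistent, with every proper subset consistent. -/
def IsMUS {V : Type} (M : Finset (PropForm V)) : Prop :=
  ¬ Sat M ∧ ∀ M' ⊂ M, Sat M'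

/-- The set of minimal unsatisfiable subsets of `K`. -/
def MUSes {V : Type} (K : Finset (PropForm V)) : Set (Finset (PropForm V)) :=
  {M | M ⊆ K ∧ IsMUS M}

/-- `M` is a maximal satisfiable subset of `K`. -/
def IsMSSof {V : Type} [DecidableEq V] (K M : Finset (PropForm V)) : Prop :=
  M ⊆ K ∧ Sat M ∧ ∀ a ∈ K, a ∉ M → ¬ Sat (insert a M)

/-- The set of maximal satisfiable subsets of `K`. -/
def MSSes {V : Type} [DecidableEq V] (K : Finset (PropForm V)) : Set (Finset (PropForm V)) :=
  {M | IsMSSof K M}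

lemma sat_mono {V : Type} {N M : Finset (PropForm V)} (h : N ⊆ M) : Sat M → Sat N :=
  fun ⟨v, hv⟩ => ⟨v, fun f hf => hv f (h hf)⟩

lemma exists_mus {V : Type} : ∀ (M : Finset (PropForm V)), ¬ Sat M → ∃ N, N ⊆ M ∧ IsMUS N := by
  intro M
  induction M using Finset.strongInduction with
  | _ M ih =>
    intro hM
    by_cases h : ∀ M' ⊂ M, Sat M'
    · exact ⟨M, le_refl _, hM, h⟩
    · push_neg at h
      obtain ⟨M', hM', hns⟩ := h
      obtain ⟨N, hN, hmusN⟩ := ih M' hM' hns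
      exact ⟨N, hN.trans hM'.subset, hmusN⟩

theorem stmt4 {V : Type} [DecidableEq V] (n : ℕ) (K : Fin n → Finset (PropForm V))
    (hdisj : ∀ i j, i ≠ j → Disjoint (K i) (K j))
    (hmus : MUSes (Finset.univ.sup K) = ⋃ i, MUSes (K i))
    (hmusdisj : ∀ i j, i ≠ j → Disjoint (MUSes (K i)) (MUSes (K j))) :
    (MSSes (Finset.univ.sup K)).ncard = ∏ i, (MSSes (K i)).ncard := by
  classical
  set KK := Finset.univ.sup K with hKK
  have hKsub : ∀ i, K i ⊆ KK := fun i => Finset.le_sup (Finset.mem_univ i)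
  have hmemKK : ∀ a : PropForm V, a ∈ KK ↔ ∃ i, a ∈ K i := by
    intro a; simp [hKK, Finset.mem_sup]
  have unsat_iff : ∀ M : Finset (PropForm V), M ⊆ KK →
      (¬ Sat M ↔ ∃ i, ∃ N ∈ MUSes (K i), N ⊆ M) := by
    intro M hM
    constructor
    · intro h
      obtain ⟨N, hNM, hN⟩ := exists_mus M h
      have hmem : N ∈ MUSes KK := ⟨hNM.trans hM, hN⟩
      rw [hmus] at hmem
      simp only [Set.mem_iUnion] at hmem
      obtain ⟨i, hi⟩ := hmem
      exact ⟨i, N, hi, hNM⟩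
    · rintro ⟨i, N, hNi, hNM⟩ hsat
      exact hNi.2.1 (sat_mono hNM hsat)
  have unsat_iff_i : ∀ i, ∀ M : Finset (PropForm V), M ⊆ K i →
      (¬ Sat M ↔ ∃ N ∈ MUSes (K i), N ⊆ M) := by
    intro i M hM
    constructor
    · intro h
      obtain ⟨N, hNM, hN⟩ := exists_mus M h
      exact ⟨N, ⟨hNM.trans hM, hN⟩, hNM⟩
    · rintro ⟨N, hNi, hNM⟩ hsat
      exact hNi.2.1 (sat_mono hNM hsat)
  have mss_inter : ∀ M, M ∈ MSSes KK → ∀ i, M ∩ K i ∈ MSSes (K i) := by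
    intro M hM i
    obtain ⟨hMK, hMsat, hMmax⟩ := hM
    refine ⟨Finset.inter_subset_right, sat_mono Finset.inter_subset_left hMsat, ?_⟩
    intro a ha hana
    have haM : a ∉ M := fun h => hana (Finset.mem_inter.mpr ⟨h, ha⟩)
    have hu := hMmax a (hKsub i ha) haM
    rw [unsat_iff _ (Finset.insert_subset (hKsub i ha) hMK)] at hu
    obtain ⟨j, N, hNj, hNM⟩ := hu
    have haN : a ∈ N := by
      by_contra haN
      have hsub : N ⊆ M := fun x hx => by
        rcases Finset.mem_insert.mp (hNM hx) with h | h
        · exact absurd (h ▸ hx) haN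
        · exact h
      exact hNj.2.1 (sat_mono hsub hMsat)
    have hij : j = i := by
      by_contra hne
      exact Finset.disjoint_left.mp (hdisj j i hne) (hNj.1 haN) ha
    subst hij
    rw [unsat_iff_i j _ (Finset.insert_subset ha Finset.inter_subset_right)]
    refine ⟨N, hNj, fun x hx => ?_⟩
    rcases Finset.mem_insert.mp (hNM hx) with h | h
    · exact h ▸ Finset.mem_insert_self _ _
    · exact Finset.mem_insert_of_mem (Finset.mem_inter.mpr ⟨h, hNj.1 hx⟩)
  have sup_inter : ∀ (t : Fin n → Finset (PropForm V)), (∀ i, t i ⊆ K i) →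
      ∀ i, (Finset.univ.sup t) ∩ K i = t i := by
    intro t ht i
    apply Finset.Subset.antisymm
    · intro x hx
      obtain ⟨hx1, hx2⟩ := Finset.mem_inter.mp hx
      rw [Finset.mem_sup] at hx1
      obtain ⟨j, _, hxj⟩ := hx1
      rcases eq_or_ne j i with rfl | hne
      · exact hxj
      · exact absurd hx2 (Finset.disjoint_left.mp (hdisj j i hne) (ht j hxj))
    · intro x hx
      exact Finset.mem_inter.mpr ⟨Finset.mem_sup.mpr ⟨i, Finset.mem_univ i, hx⟩, ht i hx⟩
  have mss_sup : ∀ (t : Fin n → Finset (PropForm V)), (∀ i, t i ∈ MSSes (K i)) →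
      Finset.univ.sup t ∈ MSSes KK := by
    intro t ht
    have hsub : ∀ i, t i ⊆ K i := fun i => (ht i).1
    have hTK : Finset.univ.sup t ⊆ KK := by
      intro x hx
      rw [Finset.mem_sup] at hx
      obtain ⟨j, _, hxj⟩ := hx
      exact hKsub j (hsub j hxj)
    refine ⟨hTK, ?_, ?_⟩
    · by_contra h
      rw [unsat_iff _ hTK] at h
      obtain ⟨i, N, hNi, hNM⟩ := h
      have hNt : N ⊆ t i := by
        rw [← sup_inter t hsub i]
        exact fun x hx => Finset.mem_inter.mpr ⟨hNM hx, hNi.1 hx⟩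
      exact hNi.2.1 (sat_mono hNt (ht i).2.1)
    · intro a ha hna
      obtain ⟨i, hi⟩ := (hmemKK a).mp ha
      have hati : a ∉ t i := fun h =>
        hna (Finset.mem_sup.mpr ⟨i, Finset.mem_univ i, h⟩)
      have h1 := (ht i).2.2 a hi hati
      intro hsat
      apply h1
      refine sat_mono ?_ hsat
      apply Finset.insert_subset_insert
      exact fun x hx => Finset.mem_sup.mpr ⟨i, Finset.mem_univ i, hx⟩
  let e : (MSSes KK) ≃ (∀ i, MSSes (K i)) :=
  { toFun := fun M i => ⟨(M : Finset (PropForm V)) ∩ K i, mss_inter _ M.2 i⟩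
    invFun := fun t => ⟨Finset.univ.sup (fun i => (t i : Finset (PropForm V))),
      mss_sup _ (fun i => (t i).2)⟩
    left_inv := by
      rintro ⟨M, hM⟩
      apply Subtype.ext
      apply Finset.ext
      intro x
      simp only [Finset.mem_sup, Finset.mem_inter]
      constructor
      · rintro ⟨i, _, hx, _⟩; exact hx
      · intro hx
        obtain ⟨i, hi⟩ := (hmemKK x).mp (hM.1 hx)
        exact ⟨i, Finset.mem_univ i, hx, hi⟩
    right_inv := by
      intro t
      funext i
      exact Subtype.ext (sup_inter _ (fun j => (t j).2.1) i) }
  calc (MSSes KK).ncard = Nat.card (MSSes KK) := (Nat.card_coe_set_eq _).symm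
    _ = Nat.card (∀ i, MSSes (K i)) := Nat.card_congr e
    _ = ∏ i, Nat.card (MSSes (K i)) := Nat.card_pi
    _ = ∏ i, (MSSes (K i)).ncard :=
        Finset.prod_congr rfl (fun i _ => Nat.card_coe_set_eq _)
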